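/- (Oscillation bounds for the velocity of a profile curve.) Let γ ∈ P, L := L[γ], and let (a,b) ⊆ [0,1] be an interval with γ₁(t) > 0 for all t ∈ (a,b). Then |γ̇₁(b) − γ̇₁(a)| ≤ (L/(2π)) ∫_a^b |k₁(t) k₂(t)|·2πL γ₁(t) dt and |γ̇₂(b) − γ̇₂(a)| ≤ √(L/(2π)) · (∫_a^b k₁(t)²·2πL γ₁(t) dt)^{1/2} · (∫_a^b γ̇₁(t)²/γ₁(t) dt)^{1/2}. -/

import Mathlib

open MeasureTheory Real Filter

noncomputable section

/-- First component of the velocity of a plane curve. -/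
def d1 (γ : ℝ → ℝ × ℝ) (t : ℝ) : ℝ := (deriv γ t).1

/-- Second component of the velocity of a plane curve. -/
def d2 (γ : ℝ → ℝ × ℝ) (t : ℝ) : ℝ := (deriv γ t).2

/-- First component of the acceleration of a plane curve. -/
def dd1 (γ : ℝ → ℝ × ℝ) (t : ℝ) : ℝ := deriv (d1 γ) t

/-- Second component of the acceleration of a plane curve. -/
def dd2 (γ : ℝ → ℝ × ℝ) (t : ℝ) : ℝ := deriv (d2 γ) t

/-- Speed `|γ̇(t)|`. -/
def speed (γ : ℝ → ℝ × ℝ) (t : ℝ) : ℝ := ‖deriv γ t‖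

/-- Arc length `L[γ] = ∫₀¹ |γ̇(t)| dt`. -/
def arcLen (γ : ℝ → ℝ × ℝ) : ℝ := ∫ t in (0:ℝ)..1, speed γ t

/-- First principal curvature `k₁ = (γ̈₂γ̇₁ − γ̈₁γ̇₂)/|γ̇|³`. -/
def k1 (γ : ℝ → ℝ × ℝ) (t : ℝ) : ℝ :=
  (dd2 γ t * d1 γ t - dd1 γ t * d2 γ t) / (speed γ t) ^ 3

/-- Second principal curvature `k₂ = γ̇₂/(γ₁|γ̇|)`. -/
def k2 (γ : ℝ → ℝ × ℝ) (t : ℝ) : ℝ := d2 γ t / ((γ t).1 * speed γ t)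

/-- Willmore energy `W[γ] = (π/2)∫₀¹ (k₁+k₂)² γ₁ |γ̇| dt`. -/
def willmore (γ : ℝ → ℝ × ℝ) : ℝ :=
  (π / 2) * ∫ t in (0:ℝ)..1, (k1 γ t + k2 γ t) ^ 2 * (γ t).1 * speed γ t

/-- Area `A[γ] = 2π ∫₀¹ γ₁ |γ̇| dt`. -/
def area (γ : ℝ → ℝ × ℝ) : ℝ := (2 * π) * ∫ t in (0:ℝ)..1, (γ t).1 * speed γ t

/-- Volume `V[γ] = π |∫₀¹ γ₁² γ̇₂ dt|`. -/
def vol (γ : ℝ → ℝ × ℝ) : ℝ := π * |∫ t in (0:ℝ)..1, ((γ t).1) ^ 2 * d2 γ t|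

/-- The class `P` of admissible profile curves: `γ ∈ C¹([0,1]) ∩ W²²_loc((0,1))`,
mapping into the right half plane, with `γ₁(0) = γ₁(1) = 0`, `γ₁ > 0` on `(0,1)`,
parameterized proportional to arc length, and curvature bounded in `L²`. -/
structure IsProfileCurve (γ : ℝ → ℝ × ℝ) : Prop where
  diff : ∀ t ∈ Set.Icc (0:ℝ) 1, DifferentiableAt ℝ γ t
  contDeriv : ContinuousOn (deriv γ) (Set.Icc (0:ℝ) 1)
  halfPlane : ∀ t ∈ Set.Icc (0:ℝ) 1, 0 ≤ (γ t).1
  end0 : (γ 0).1 = 0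
  end1 : (γ 1).1 = 0
  posInterior : ∀ t ∈ Set.Ioo (0:ℝ) 1, 0 < (γ t).1
  arcPar : ∀ t ∈ Set.Icc (0:ℝ) 1, speed γ t = arcLen γ
  sobolevLoc : ∀ a b : ℝ, 0 < a → a ≤ b → b < 1 →
    MeasureTheory.IntegrableOn (fun t => (dd1 γ t) ^ 2 + (dd2 γ t) ^ 2) (Set.Icc a b) ∧
    ∀ t ∈ Set.Icc a b,
      d1 γ t = d1 γ a + ∫ s in a..t, dd1 γ s ∧
      d2 γ t = d2 γ a + ∫ s in a..t, dd2 γ s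
  curvL2 : MeasureTheory.IntegrableOn
    (fun t => ((k1 γ t) ^ 2 + (k2 γ t) ^ 2) * (2 * π) * (γ t).1 * speed γ t)
    (Set.Ioo (0:ℝ) 1)

/-- The constraint class `F_σ`: admissible profile curves with `A[γ] = 1` and
`V[γ] = σ/(6√π)`. -/
def memF (σ : ℝ) (γ : ℝ → ℝ × ℝ) : Prop :=
  IsProfileCurve γ ∧ area γ = 1 ∧ vol γ = σ / (6 * Real.sqrt π)

/-- `β(σ) = inf {W[γ] : γ ∈ F_σ}`. -/
def betaFn (σ : ℝ) : ℝ := sInf (willmore '' {γ | memF σ γ})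

/-- The normalized class `F_σ^{0+}`. -/
def memFplus (σ : ℝ) (γ : ℝ → ℝ × ℝ) : Prop :=
  memF σ γ ∧ γ 0 = (0, 0) ∧ 0 ≤ ∫ t in (0:ℝ)..1, (γ t).2

/-- Mean curvature `H = k₁ + k₂`. -/
def meanH (γ : ℝ → ℝ × ℝ) (t : ℝ) : ℝ := k1 γ t + k2 γ t

/-- Gauß curvature `K = k₁k₂`. -/
def gaussK (γ : ℝ → ℝ × ℝ) (t : ℝ) : ℝ := k1 γ t * k2 γ t

/-- Laplace–Beltrami operator applied to the mean curvature:
`Δ_g H = (1/(γ₁ L²)) (γ₁ Ḣ)'`. -/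
def lapH (γ : ℝ → ℝ × ℝ) (t : ℝ) : ℝ :=
  (1 / ((γ t).1 * (arcLen γ) ^ 2)) * deriv (fun s => (γ s).1 * deriv (meanH γ) s) t


lemma speed_eq (γ : ℝ → ℝ × ℝ) (t : ℝ) : speed γ t = max |d1 γ t| |d2 γ t| := by
  simp [speed, d1, d2, Prod.norm_def, Real.norm_eq_abs]

lemma arcLen_pos (γ : ℝ → ℝ × ℝ) (hγ : IsProfileCurve γ) : 0 < arcLen γ := by
  have h0 : (0:ℝ) ∈ Set.Icc (0:ℝ) 1 := ⟨le_rfl, zero_le_one⟩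
  have hnn : 0 ≤ arcLen γ := by
    rw [← hγ.arcPar 0 h0]; exact norm_nonneg _
  rcases hnn.lt_or_eq with h | h
  · exact h
  · exfalso
    have hderiv : ∀ x ∈ Set.Icc (0:ℝ) 1, HasDerivWithinAt γ (deriv γ x) (Set.Icc (0:ℝ) 1) x :=
      fun x hx => ((hγ.diff x hx).hasDerivAt).hasDerivWithinAt
    have hbound : ∀ x ∈ Set.Icc (0:ℝ) 1, ‖deriv γ x‖ ≤ 0 := fun x hx => by
      rw [show ‖deriv γ x‖ = speed γ x from rfl, hγ.arcPar x hx, ← h]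
    have := Convex.norm_image_sub_le_of_norm_hasDerivWithin_le hderiv hbound
      (convex_Icc 0 1) h0 (⟨by norm_num, by norm_num⟩ : (1/2:ℝ) ∈ Set.Icc (0:ℝ) 1)
    have hc : γ (1/2) = γ 0 := by
      have : ‖γ (1/2) - γ 0‖ ≤ 0 := by simpa using this
      have := le_antisymm this (norm_nonneg _)
      rwa [norm_eq_zero, sub_eq_zero] at this
    have hpos := hγ.posInterior (1/2) ⟨by norm_num, by norm_num⟩
    rw [hc, hγ.end0] at hpos
    exact lt_irrefl _ hpos

lemma deriv_eq_zero_of_abs_eq (f : ℝ → ℝ) {L t : ℝ}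
    (hb : ∀ s ∈ Set.Icc (0:ℝ) 1, |f s| ≤ L)
    (ht : t ∈ Set.Ioo (0:ℝ) 1) (hft : |f t| = L) : deriv f t = 0 := by
  have hmem : Set.Icc (0:ℝ) 1 ∈ nhds t := Icc_mem_nhds ht.1 ht.2
  have hL : 0 ≤ L := hft ▸ abs_nonneg (f t)
  rcases (abs_eq hL).mp hft with h | h
  · refine IsLocalMax.deriv_eq_zero ?_
    filter_upwards [hmem] with s hs
    rw [h]; exact (le_abs_self _).trans (hb s hs)
  · refine IsLocalMin.deriv_eq_zero ?_
    filter_upwards [hmem] with s hs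
    rw [h]; exact (abs_le.mp (hb s hs)).1

lemma key_pointwise (γ : ℝ → ℝ × ℝ) (hγ : IsProfileCurve γ) {t : ℝ}
    (ht : t ∈ Set.Ioo (0:ℝ) 1) :
    (dd1 γ t = 0 ∧ (d1 γ t)^2 = (arcLen γ)^2) ∨
    (dd2 γ t = 0 ∧ (d2 γ t)^2 = (arcLen γ)^2) := by
  have hb1 : ∀ s ∈ Set.Icc (0:ℝ) 1, |d1 γ s| ≤ arcLen γ := fun s hs => by
    rw [← hγ.arcPar s hs, speed_eq]; exact le_max_left _ _
  have hb2 : ∀ s ∈ Set.Icc (0:ℝ) 1, |d2 γ s| ≤ arcLen γ := fun s hs => by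
    rw [← hγ.arcPar s hs, speed_eq]; exact le_max_right _ _
  have hsp : max |d1 γ t| |d2 γ t| = arcLen γ := by
    rw [← speed_eq]; exact hγ.arcPar t (Set.Ioo_subset_Icc_self ht)
  rcases max_cases |d1 γ t| |d2 γ t| with ⟨h, _⟩ | ⟨h, _⟩
  · left
    have habs : |d1 γ t| = arcLen γ := by rw [← hsp, h]
    exact ⟨deriv_eq_zero_of_abs_eq (d1 γ) hb1 ht habs, by rw [← sq_abs, habs]⟩
  · right
    have habs : |d2 γ t| = arcLen γ := by rw [← hsp, h]
    exact ⟨deriv_eq_zero_of_abs_eq (d2 γ) hb2 ht habs, by rw [← sq_abs, habs]⟩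
lemma key_bounds (γ : ℝ → ℝ × ℝ) (hγ : IsProfileCurve γ) {t : ℝ}
    (ht : t ∈ Set.Ioo (0:ℝ) 1) :
    |dd1 γ t| ≤ arcLen γ / (2*π) * (|k1 γ t * k2 γ t| * (2*π*arcLen γ*(γ t).1)) ∧
    |dd2 γ t| ≤ Real.sqrt (arcLen γ/(2*π)) *
        Real.sqrt ((k1 γ t)^2 * (2*π*arcLen γ*(γ t).1)) *
        Real.sqrt ((d1 γ t)^2/(γ t).1) := by
  set L := arcLen γ with hLdef
  have hL : 0 < L := arcLen_pos γ hγ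
  have hπ : 0 < π := Real.pi_pos
  have hγ1 : 0 < (γ t).1 := hγ.posInterior t ht
  have hsp : speed γ t = L := hγ.arcPar t (Set.Ioo_subset_Icc_self ht)
  rcases key_pointwise γ hγ ht with ⟨h1, h2⟩ | ⟨h1, h2⟩
  · constructor
    · rw [h1, abs_zero]
      have : (0:ℝ) ≤ 2*π*L*(γ t).1 := by positivity
      positivity
    · -- |dd2| ≤ √(L/2π) √(k1² 2πLγ₁) √(d1²/γ₁) = |L k1 d1| = |dd2|
      have hkey : L * k1 γ t * d1 γ t = dd2 γ t := by
        unfold k1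
        rw [hsp, h1]
        field_simp
        linear_combination (dd2 γ t) * h2
      have hsq : (L/(2*π)) * ((k1 γ t)^2 * (2*π*L*(γ t).1)) * ((d1 γ t)^2/(γ t).1)
          = (L * k1 γ t * d1 γ t)^2 := by
        field_simp
      rw [← Real.sqrt_mul (by positivity : (0:ℝ) ≤ L/(2*π)),
        ← Real.sqrt_mul (by positivity : (0:ℝ) ≤ L/(2*π) * ((k1 γ t)^2*(2*π*L*(γ t).1))),
        hsq, Real.sqrt_sq_eq_abs, hkey]
  · constructor
    · -- RHS = |dd1|
      have hk : k1 γ t * k2 γ t = -(dd1 γ t)/(L^2 * (γ t).1) := by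
        unfold k1 k2
        rw [hsp, h1]
        field_simp
        linear_combination (-dd1 γ t) * h2
      rw [hk]
      rw [abs_div, abs_neg, abs_of_pos (by positivity : (0:ℝ) < L^2 * (γ t).1)]
      apply le_of_eq
      field_simp
    · rw [h1, abs_zero]
      positivity
lemma meas_d1 (γ : ℝ → ℝ × ℝ) : Measurable (d1 γ) := measurable_fst.comp (measurable_deriv γ)
lemma meas_d2 (γ : ℝ → ℝ × ℝ) : Measurable (d2 γ) := measurable_snd.comp (measurable_deriv γ)
lemma meas_dd1 (γ : ℝ → ℝ × ℝ) : Measurable (dd1 γ) := measurable_deriv _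
lemma meas_dd2 (γ : ℝ → ℝ × ℝ) : Measurable (dd2 γ) := measurable_deriv _
lemma meas_speed (γ : ℝ → ℝ × ℝ) : Measurable (speed γ) := (measurable_deriv γ).norm
lemma meas_k1 (γ : ℝ → ℝ × ℝ) : Measurable (k1 γ) :=
  (((meas_dd2 γ).mul (meas_d1 γ)).sub ((meas_dd1 γ).mul (meas_d2 γ))).div
    ((meas_speed γ).pow_const 3)

lemma gamma1_aemeas (γ : ℝ → ℝ × ℝ) (hγ : IsProfileCurve γ) {s : Set ℝ}
    (hs : MeasurableSet s) (hsub : s ⊆ Set.Icc 0 1) :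
    AEMeasurable (fun t => (γ t).1) (volume.restrict s) := by
  have hc : ContinuousOn γ (Set.Icc 0 1) :=
    fun t ht => (hγ.diff t ht).continuousAt.continuousWithinAt
  exact ((continuous_fst.comp_continuousOn hc).mono hsub).aemeasurable hs

lemma h1_int (γ : ℝ → ℝ × ℝ) (hγ : IsProfileCurve γ) :
    IntegrableOn (fun t => |k1 γ t * k2 γ t| * (2*π*arcLen γ*(γ t).1))
      (Set.Ioo (0:ℝ) 1) := by
  have hπ : 0 < π := Real.pi_pos
  have hL : 0 < arcLen γ := arcLen_pos γ hγ
  have hγ1 := gamma1_aemeas γ hγ measurableSet_Ioo Set.Ioo_subset_Icc_self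
  have hk2 : AEMeasurable (k2 γ) (volume.restrict (Set.Ioo (0:ℝ) 1)) :=
    (meas_d2 γ).aemeasurable.div (hγ1.mul (meas_speed γ).aemeasurable)
  have hmeas : AEStronglyMeasurable
      (fun t => |k1 γ t * k2 γ t| * (2*π*arcLen γ*(γ t).1))
      (volume.restrict (Set.Ioo (0:ℝ) 1)) :=
    (((continuous_abs.measurable.comp_aemeasurable
        ((meas_k1 γ).aemeasurable.mul hk2))).mul
      (aemeasurable_const.mul hγ1)).aestronglyMeasurable
  refine MeasureTheory.Integrable.mono (hγ.curvL2) hmeas ?_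
  filter_upwards [ae_restrict_mem measurableSet_Ioo] with t ht
  have hsp : speed γ t = arcLen γ := hγ.arcPar t (Set.Ioo_subset_Icc_self ht)
  have hγ1t : 0 ≤ (γ t).1 := hγ.halfPlane t (Set.Ioo_subset_Icc_self ht)
  have h2 : (0:ℝ) ≤ 2*π*arcLen γ*(γ t).1 := mul_nonneg (by positivity) hγ1t
  have hval : |k1 γ t * k2 γ t| ≤ (k1 γ t)^2 + (k2 γ t)^2 := by
    rw [abs_mul]
    nlinarith [sq_nonneg (|k1 γ t| - |k2 γ t|), sq_abs (k1 γ t), sq_abs (k2 γ t),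
      abs_nonneg (k1 γ t), abs_nonneg (k2 γ t)]
  have hF : 0 ≤ ((k1 γ t)^2 + (k2 γ t)^2) * (2*π) * (γ t).1 * speed γ t := by
    rw [hsp]; exact mul_nonneg (mul_nonneg (by positivity) hγ1t) hL.le
  rw [Real.norm_eq_abs, Real.norm_eq_abs, abs_of_nonneg (mul_nonneg (abs_nonneg _) h2),
    abs_of_nonneg hF, hsp]
  nlinarith [mul_le_mul_of_nonneg_right hval h2]

lemma dd1_abs_int (γ : ℝ → ℝ × ℝ) (hγ : IsProfileCurve γ) {a b : ℝ}
    (ha : 0 < a) (hab : a ≤ b) (hb : b < 1) :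
    IntegrableOn (fun t => |dd1 γ t|) (Set.Icc a b) ∧
    IntegrableOn (fun t => |dd2 γ t|) (Set.Icc a b) := by
  obtain ⟨hint, -⟩ := hγ.sobolevLoc a b ha hab hb
  have hg : IntegrableOn (fun t => 1 + ((dd1 γ t)^2 + (dd2 γ t)^2)) (Set.Icc a b) :=
    (integrableOn_const measure_Icc_lt_top.ne).add hint
  constructor
  · refine MeasureTheory.Integrable.mono hg ((meas_dd1 γ).abs.aestronglyMeasurable) ?_
    filter_upwards with t
    rw [Real.norm_eq_abs, Real.norm_eq_abs, abs_abs,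
      abs_of_nonneg (by positivity : (0:ℝ) ≤ 1 + ((dd1 γ t)^2 + (dd2 γ t)^2))]
    nlinarith [sq_nonneg (|dd1 γ t| - 1), sq_abs (dd1 γ t), abs_nonneg (dd1 γ t),
      sq_nonneg (dd2 γ t)]
  · refine MeasureTheory.Integrable.mono hg ((meas_dd2 γ).abs.aestronglyMeasurable) ?_
    filter_upwards with t
    rw [Real.norm_eq_abs, Real.norm_eq_abs, abs_abs,
      abs_of_nonneg (by positivity : (0:ℝ) ≤ 1 + ((dd1 γ t)^2 + (dd2 γ t)^2))]
    nlinarith [sq_nonneg (|dd2 γ t| - 1), sq_abs (dd2 γ t), abs_nonneg (dd2 γ t),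
      sq_nonneg (dd1 γ t)]
lemma exists_close (γ : ℝ → ℝ × ℝ) (hγ : IsProfileCurve γ) {a b : ℝ}
    (ha : 0 ≤ a) (hab : a < b) (hb : b ≤ 1) {ε : ℝ} (hε : 0 < ε) :
    ∃ a' b', a < a' ∧ a' < b' ∧ b' < b ∧
      |d1 γ a' - d1 γ a| ≤ ε ∧ |d2 γ a' - d2 γ a| ≤ ε ∧
      |d1 γ b' - d1 γ b| ≤ ε ∧ |d2 γ b' - d2 γ b| ≤ ε := by
  have hcd1 : ContinuousOn (d1 γ) (Set.Icc (0:ℝ) 1) :=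
    continuous_fst.comp_continuousOn hγ.contDeriv
  have hcd2 : ContinuousOn (d2 γ) (Set.Icc (0:ℝ) 1) :=
    continuous_snd.comp_continuousOn hγ.contDeriv
  have haI : a ∈ Set.Icc (0:ℝ) 1 := ⟨ha, le_trans hab.le hb⟩
  have hbI : b ∈ Set.Icc (0:ℝ) 1 := ⟨le_trans ha hab.le, hb⟩
  have hsub : Set.Ioo a b ⊆ Set.Icc (0:ℝ) 1 := fun t ht =>
    ⟨le_of_lt (lt_of_le_of_lt ha ht.1), le_of_lt (lt_of_lt_of_le ht.2 hb)⟩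
  have h1a : Tendsto (d1 γ) (nhdsWithin a (Set.Ioo a b)) (nhds (d1 γ a)) :=
    (hcd1 a haI).mono_left (nhdsWithin_mono a hsub)
  have h2a : Tendsto (d2 γ) (nhdsWithin a (Set.Ioo a b)) (nhds (d2 γ a)) :=
    (hcd2 a haI).mono_left (nhdsWithin_mono a hsub)
  haveI := left_nhdsWithin_Ioo_neBot hab
  have hev : ∀ᶠ s in nhdsWithin a (Set.Ioo a b),
      s ∈ Set.Ioo a b ∧ |d1 γ s - d1 γ a| ≤ ε ∧ |d2 γ s - d2 γ a| ≤ ε := by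
    filter_upwards [self_mem_nhdsWithin,
      h1a (Metric.closedBall_mem_nhds _ hε), h2a (Metric.closedBall_mem_nhds _ hε)]
      with s hs h1 h2
    refine ⟨hs, ?_, ?_⟩
    · simpa [Real.dist_eq] using h1
    · simpa [Real.dist_eq] using h2
  obtain ⟨a', ha'mem, ha'1, ha'2⟩ := hev.exists
  have hsub' : Set.Ioo a' b ⊆ Set.Icc (0:ℝ) 1 := fun t ht =>
    ⟨le_of_lt (lt_of_le_of_lt (ha.trans ha'mem.1.le) ht.1), le_of_lt (lt_of_lt_of_le ht.2 hb)⟩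
  have h1b : Tendsto (d1 γ) (nhdsWithin b (Set.Ioo a' b)) (nhds (d1 γ b)) :=
    (hcd1 b hbI).mono_left (nhdsWithin_mono b hsub')
  have h2b : Tendsto (d2 γ) (nhdsWithin b (Set.Ioo a' b)) (nhds (d2 γ b)) :=
    (hcd2 b hbI).mono_left (nhdsWithin_mono b hsub')
  haveI := right_nhdsWithin_Ioo_neBot ha'mem.2
  have hev' : ∀ᶠ s in nhdsWithin b (Set.Ioo a' b),
      s ∈ Set.Ioo a' b ∧ |d1 γ s - d1 γ b| ≤ ε ∧ |d2 γ s - d2 γ b| ≤ ε := by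
    filter_upwards [self_mem_nhdsWithin,
      h1b (Metric.closedBall_mem_nhds _ hε), h2b (Metric.closedBall_mem_nhds _ hε)]
      with s hs h1 h2
    refine ⟨hs, ?_, ?_⟩
    · simpa [Real.dist_eq] using h1
    · simpa [Real.dist_eq] using h2
  obtain ⟨b', hb'mem, hb'1, hb'2⟩ := hev'.exists
  exact ⟨a', b', ha'mem.1, hb'mem.1, hb'mem.2, ha'1, ha'2, hb'1, hb'2⟩

lemma part1_interval (γ : ℝ → ℝ × ℝ) (hγ : IsProfileCurve γ) {a b a' b' : ℝ}
    (ha : 0 ≤ a) (hab : a < b) (hb : b ≤ 1)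
    (h1 : a < a') (h2 : a' < b') (h3 : b' < b) :
    |d1 γ b' - d1 γ a'| ≤ arcLen γ / (2*π) *
      ∫ t in a..b, |k1 γ t * k2 γ t| * (2*π*arcLen γ*(γ t).1) := by
  have ha'0 : 0 < a' := lt_of_le_of_lt ha h1
  have hb'1 : b' < 1 := lt_of_lt_of_le h3 hb
  have hπ : 0 < π := Real.pi_pos
  have hL : 0 < arcLen γ := arcLen_pos γ hγ
  obtain ⟨hint, hrep⟩ := hγ.sobolevLoc a' b' ha'0 h2.le hb'1
  have hftc := (hrep b' ⟨h2.le, le_rfl⟩).1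
  set g : ℝ → ℝ :=
    fun t => arcLen γ / (2*π) * (|k1 γ t * k2 γ t| * (2*π*arcLen γ*(γ t).1)) with hgdef
  have hgint : IntervalIntegrable g volume a b := by
    rw [intervalIntegrable_iff_integrableOn_Ioc_of_le hab.le]
    have h0 : IntegrableOn (fun t => |k1 γ t * k2 γ t| * (2*π*arcLen γ*(γ t).1))
        (Set.Ioo a b) :=
      (h1_int γ hγ).mono_set (fun t ht => ⟨lt_of_le_of_lt ha ht.1, lt_of_lt_of_le ht.2 hb⟩)
    have h0' : IntegrableOn (fun t => |k1 γ t * k2 γ t| * (2*π*arcLen γ*(γ t).1))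
        (Set.Ioc a b) := by
      apply MeasureTheory.IntegrableOn.congr_set_ae h0
      exact (MeasureTheory.Ioo_ae_eq_Ioc).symm
    exact h0'.const_mul _
  have huIcc : Set.uIcc a' b' ⊆ Set.uIcc a b := by
    rw [Set.uIcc_of_le h2.le, Set.uIcc_of_le hab.le]
    exact Set.Icc_subset_Icc h1.le h3.le
  have hgint' : IntervalIntegrable g volume a' b' := hgint.mono_set huIcc
  have habsint : IntervalIntegrable (fun t => |dd1 γ t|) volume a' b' := by
    rw [intervalIntegrable_iff_integrableOn_Ioc_of_le h2.le]
    exact ((dd1_abs_int γ hγ ha'0 h2.le hb'1).1).mono_set Set.Ioc_subset_Icc_self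
  have hIoo : Set.Icc a' b' ⊆ Set.Ioo (0:ℝ) 1 := fun x hx =>
    ⟨lt_of_lt_of_le ha'0 hx.1, lt_of_le_of_lt hx.2 hb'1⟩
  calc |d1 γ b' - d1 γ a'| = |∫ s in a'..b', dd1 γ s| := by rw [hftc]; ring_nf
    _ ≤ ∫ s in a'..b', |dd1 γ s| := intervalIntegral.abs_integral_le_integral_abs h2.le
    _ ≤ ∫ s in a'..b', g s := by
        apply intervalIntegral.integral_mono_on h2.le habsint hgint'
        intro x hx
        exact (key_bounds γ hγ (hIoo hx)).1
    _ ≤ ∫ s in a..b, g s := by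
        apply intervalIntegral.integral_mono_interval h1.le h2.le h3.le ?_ hgint
        filter_upwards [ae_restrict_mem measurableSet_Ioc] with t ht
        have hγ1t : 0 ≤ (γ t).1 := hγ.halfPlane t
          ⟨le_of_lt (lt_of_le_of_lt ha ht.1), le_trans ht.2 hb⟩
        exact mul_nonneg (by positivity)
          (mul_nonneg (abs_nonneg _) (mul_nonneg (by positivity) hγ1t))
    _ = arcLen γ / (2*π) *
        ∫ t in a..b, |k1 γ t * k2 γ t| * (2*π*arcLen γ*(γ t).1) := by
        rw [hgdef, intervalIntegral.integral_const_mul]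
lemma part2_interval (γ : ℝ → ℝ × ℝ) (hγ : IsProfileCurve γ) {a b a' b' : ℝ}
    (ha : 0 ≤ a) (hab : a < b) (hb : b ≤ 1)
    (h1 : a < a') (h2 : a' < b') (h3 : b' < b) :
    ENNReal.ofReal |d2 γ b' - d2 γ a'|
      ≤ ENNReal.ofReal (Real.sqrt (arcLen γ / (2 * π)))
          * (∫⁻ t in Set.Ioo a b,
              ENNReal.ofReal ((k1 γ t) ^ 2 * (2 * π * arcLen γ * (γ t).1))) ^ (1/2 : ℝ)
          * (∫⁻ t in Set.Ioo a b,
              ENNReal.ofReal ((d1 γ t) ^ 2 / (γ t).1)) ^ (1/2 : ℝ) := by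
  have ha'0 : 0 < a' := lt_of_le_of_lt ha h1
  have hb'1 : b' < 1 := lt_of_lt_of_le h3 hb
  have hπ : 0 < π := Real.pi_pos
  have hL : 0 < arcLen γ := arcLen_pos γ hγ
  have hIooab : Set.Ioo a b ⊆ Set.Ioo (0:ℝ) 1 := fun t ht =>
    ⟨lt_of_le_of_lt ha ht.1, lt_of_lt_of_le ht.2 hb⟩
  obtain ⟨hint, hrep⟩ := hγ.sobolevLoc a' b' ha'0 h2.le hb'1
  have hftc := (hrep b' ⟨h2.le, le_rfl⟩).2
  set u : ℝ → ℝ := fun t => (k1 γ t) ^ 2 * (2 * π * arcLen γ * (γ t).1) with hudef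
  set v : ℝ → ℝ := fun t => (d1 γ t) ^ 2 / (γ t).1 with hvdef
  set μ := volume.restrict (Set.Ioo a b) with hμdef
  set f : ℝ → ENNReal := fun t => ENNReal.ofReal (Real.sqrt (u t)) with hfdef
  set g : ℝ → ENNReal := fun t => ENNReal.ofReal (Real.sqrt (v t)) with hgdef
  -- measurability
  have hγ1ae : AEMeasurable (fun t => (γ t).1) μ :=
    gamma1_aemeas γ hγ measurableSet_Ioo
      (Set.Subset.trans hIooab Set.Ioo_subset_Icc_self)
  have hu : AEMeasurable u μ :=
    (((meas_k1 γ).pow_const 2).aemeasurable).mul (aemeasurable_const.mul hγ1ae)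
  have hv : AEMeasurable v μ :=
    (((meas_d1 γ).pow_const 2).aemeasurable).div hγ1ae
  have hf : AEMeasurable f μ :=
    ENNReal.measurable_ofReal.comp_aemeasurable
      (Real.continuous_sqrt.measurable.comp_aemeasurable hu)
  have hg : AEMeasurable g μ :=
    ENNReal.measurable_ofReal.comp_aemeasurable
      (Real.continuous_sqrt.measurable.comp_aemeasurable hv)
  -- step 1: real estimate up to the lintegral over Ioo a b
  have hIdd2 : IntegrableOn (fun t => |dd2 γ t|) (Set.Ioc a' b') :=
    ((dd1_abs_int γ hγ ha'0 h2.le hb'1).2).mono_set Set.Ioc_subset_Icc_self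
  have step1 : ENNReal.ofReal |d2 γ b' - d2 γ a'|
      ≤ ∫⁻ s in Set.Ioc a' b', ENNReal.ofReal |dd2 γ s| := by
    have e1 : |d2 γ b' - d2 γ a'| ≤ ∫ s in a'..b', |dd2 γ s| := by
      have : d2 γ b' - d2 γ a' = ∫ s in a'..b', dd2 γ s := by rw [hftc]; ring
      rw [this]
      exact intervalIntegral.abs_integral_le_integral_abs h2.le
    refine le_trans (ENNReal.ofReal_le_ofReal e1) (le_of_eq ?_)
    rw [intervalIntegral.integral_of_le h2.le]
    exact MeasureTheory.ofReal_integral_eq_lintegral_ofReal hIdd2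
      (Filter.Eventually.of_forall fun x => abs_nonneg _)
  have step2 : (∫⁻ s in Set.Ioc a' b', ENNReal.ofReal |dd2 γ s|)
      ≤ ∫⁻ s in Set.Ioo a b, ENNReal.ofReal |dd2 γ s| := by
    refine lintegral_mono' (Measure.restrict_mono ?_ le_rfl) le_rfl
    exact fun t ht => ⟨lt_trans h1 ht.1, lt_of_le_of_lt ht.2 h3⟩
  have step3 : (∫⁻ s in Set.Ioo a b, ENNReal.ofReal |dd2 γ s|)
      ≤ ∫⁻ s in Set.Ioo a b,
          ENNReal.ofReal (Real.sqrt (arcLen γ / (2*π))) * (f s * g s) := by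
    refine lintegral_mono_ae ?_
    filter_upwards [ae_restrict_mem measurableSet_Ioo] with t ht
    have hkb := (key_bounds γ hγ (hIooab ht)).2
    calc ENNReal.ofReal |dd2 γ t|
        ≤ ENNReal.ofReal (Real.sqrt (arcLen γ/(2*π)) *
            (Real.sqrt (u t) * Real.sqrt (v t))) := by
          refine ENNReal.ofReal_le_ofReal ?_
          rw [← mul_assoc]
          exact hkb
      _ = ENNReal.ofReal (Real.sqrt (arcLen γ/(2*π))) * (f t * g t) := by
          rw [ENNReal.ofReal_mul (Real.sqrt_nonneg _),
            ENNReal.ofReal_mul (Real.sqrt_nonneg _)]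
  have step4 : (∫⁻ s in Set.Ioo a b,
        ENNReal.ofReal (Real.sqrt (arcLen γ / (2*π))) * (f s * g s))
      = ENNReal.ofReal (Real.sqrt (arcLen γ / (2*π))) *
          ∫⁻ s in Set.Ioo a b, f s * g s :=
    lintegral_const_mul' _ _ ENNReal.ofReal_ne_top
  have hpq : Real.HolderConjugate 2 2 := Real.holderConjugate_iff.mpr ⟨one_lt_two, by norm_num⟩
  have holder := ENNReal.lintegral_mul_le_Lp_mul_Lq μ hpq hf hg
  have hfl : (∫⁻ s, f s ^ (2:ℝ) ∂μ) = ∫⁻ t in Set.Ioo a b, ENNReal.ofReal (u t) := by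
    refine lintegral_congr_ae ?_
    filter_upwards [ae_restrict_mem measurableSet_Ioo] with t ht
    have hγ1t : 0 < (γ t).1 := hγ.posInterior t (hIooab ht)
    have hut : 0 ≤ u t := by
      rw [hudef]
      exact mul_nonneg (sq_nonneg _) (mul_nonneg (by positivity) hγ1t.le)
    show ENNReal.ofReal (Real.sqrt (u t)) ^ (2:ℝ) = ENNReal.ofReal (u t)
    rw [ENNReal.ofReal_rpow_of_nonneg (Real.sqrt_nonneg _) (by norm_num : (0:ℝ) ≤ 2),
      Real.rpow_two, Real.sq_sqrt hut]
  have hgl : (∫⁻ s, g s ^ (2:ℝ) ∂μ) = ∫⁻ t in Set.Ioo a b, ENNReal.ofReal (v t) := by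
    refine lintegral_congr_ae ?_
    filter_upwards [ae_restrict_mem measurableSet_Ioo] with t ht
    have hγ1t : 0 < (γ t).1 := hγ.posInterior t (hIooab ht)
    have hvt : 0 ≤ v t := by
      rw [hvdef]
      exact div_nonneg (sq_nonneg _) hγ1t.le
    show ENNReal.ofReal (Real.sqrt (v t)) ^ (2:ℝ) = ENNReal.ofReal (v t)
    rw [ENNReal.ofReal_rpow_of_nonneg (Real.sqrt_nonneg _) (by norm_num : (0:ℝ) ≤ 2),
      Real.rpow_two, Real.sq_sqrt hvt]
  calc ENNReal.ofReal |d2 γ b' - d2 γ a'|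
      ≤ ∫⁻ s in Set.Ioc a' b', ENNReal.ofReal |dd2 γ s| := step1
    _ ≤ ∫⁻ s in Set.Ioo a b, ENNReal.ofReal |dd2 γ s| := step2
    _ ≤ ∫⁻ s in Set.Ioo a b,
          ENNReal.ofReal (Real.sqrt (arcLen γ / (2*π))) * (f s * g s) := step3
    _ = ENNReal.ofReal (Real.sqrt (arcLen γ / (2*π))) *
          ∫⁻ s in Set.Ioo a b, f s * g s := step4
    _ ≤ ENNReal.ofReal (Real.sqrt (arcLen γ / (2*π))) *
          ((∫⁻ s, f s ^ (2:ℝ) ∂μ) ^ (1/2:ℝ) * (∫⁻ s, g s ^ (2:ℝ) ∂μ) ^ (1/2:ℝ)) := by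
          refine mul_le_mul_right ?_ _
          simpa using holder
    _ = ENNReal.ofReal (Real.sqrt (arcLen γ / (2 * π)))
          * (∫⁻ t in Set.Ioo a b, ENNReal.ofReal (u t)) ^ (1/2 : ℝ)
          * (∫⁻ t in Set.Ioo a b, ENNReal.ofReal (v t)) ^ (1/2 : ℝ) := by
          rw [hfl, hgl, mul_assoc]

/-- **Oscillation bounds for the velocity of a profile curve.** -/
theorem velocity_oscillation_bounds (γ : ℝ → ℝ × ℝ) (hγ : IsProfileCurve γ)
    (a b : ℝ) (ha : 0 ≤ a) (hab : a < b) (hb : b ≤ 1)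
    (hpos : ∀ t ∈ Set.Ioo a b, 0 < (γ t).1) :
    |d1 γ b - d1 γ a|
      ≤ arcLen γ / (2 * π) *
          ∫ t in a..b, |k1 γ t * k2 γ t| * (2 * π * arcLen γ * (γ t).1) ∧
    ENNReal.ofReal |d2 γ b - d2 γ a|
      ≤ ENNReal.ofReal (Real.sqrt (arcLen γ / (2 * π)))
          * (∫⁻ t in Set.Ioo a b,
              ENNReal.ofReal ((k1 γ t) ^ 2 * (2 * π * arcLen γ * (γ t).1))) ^ (1/2 : ℝ)
          * (∫⁻ t in Set.Ioo a b,
              ENNReal.ofReal ((d1 γ t) ^ 2 / (γ t).1)) ^ (1/2 : ℝ) := by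
  constructor
  · refine le_of_forall_pos_le_add fun ε hε => ?_
    obtain ⟨a', b', h1, h2, h3, hd1a, _, hd1b, _⟩ :=
      exists_close γ hγ ha hab hb (half_pos hε)
    have hmid := part1_interval γ hγ ha hab hb h1 h2 h3
    have e1 : |d1 γ b - d1 γ b'| ≤ ε/2 := by rw [abs_sub_comm]; exact hd1b
    linarith [abs_sub_le (d1 γ b) (d1 γ b') (d1 γ a),
      abs_sub_le (d1 γ b') (d1 γ a') (d1 γ a)]
  · refine ENNReal.le_of_forall_pos_le_add fun ε hε _ => ?_
    have hε2 : 0 < (ε:ℝ)/2 := by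
      have : (0:ℝ) < ε := hε
      linarith
    obtain ⟨a', b', h1, h2, h3, _, hd2a, _, hd2b⟩ := exists_close γ hγ ha hab hb hε2
    have hmid := part2_interval γ hγ ha hab hb h1 h2 h3
    have habs : |d2 γ b - d2 γ a| ≤ |d2 γ b' - d2 γ a'| + (ε:ℝ) := by
      have e1 : |d2 γ b - d2 γ b'| ≤ (ε:ℝ)/2 := by rw [abs_sub_comm]; exact hd2b
      linarith [abs_sub_le (d2 γ b) (d2 γ b') (d2 γ a),
        abs_sub_le (d2 γ b') (d2 γ a') (d2 γ a)]
    calc ENNReal.ofReal |d2 γ b - d2 γ a|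
        ≤ ENNReal.ofReal (|d2 γ b' - d2 γ a'| + (ε:ℝ)) :=
          ENNReal.ofReal_le_ofReal habs
      _ = ENNReal.ofReal |d2 γ b' - d2 γ a'| + ENNReal.ofReal (ε:ℝ) :=
          ENNReal.ofReal_add (abs_nonneg _) ε.coe_nonneg
      _ ≤ _ + (ε : ENNReal) := by
          rw [ENNReal.ofReal_coe_nnreal]
          exact add_le_add hmid le_rfl

end
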